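/- Let A be an array of w·k nonnegative integers, partitioned into k consecutive subarrays A_0,...,A_{k-1} of length w each. Suppose A'_i is computed by the recurrence A'_i[0] = A_i[0] and A'_i[t] = A'_i[t-1] + A_i[t] for 1 ≤ t < w, and then each subarray is updated by A'_i[t] ← A'_i[t] + A'_{i-1}[w-1] sequentially for i = 1,...,k-1. Then the final array A' satisfies A'[j] = ∑_{r=0}^{j} A[r] for all 0 ≤ j < wk, i.e., A' is the prefix-sum array of A. -/

import Mathlib

/-- Correctness of the two-phase blocked prefix-sums computation. -/
theorem blocked_prefix_sums (w k : ℕ) (hw : 1 ≤ w) (A : ℕ → ℕ) (B C : ℕ → ℕ → ℕ)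
    (hB0 : ∀ i, i < k → B i 0 = A (i * w))
    (hB : ∀ i t, i < k → 1 ≤ t → t < w → B i t = B i (t - 1) + A (i * w + t))
    (hC0 : ∀ t, t < w → C 0 t = B 0 t)
    (hC : ∀ i t, 1 ≤ i → i < k → t < w → C i t = B i t + C (i - 1) (w - 1)) :
    ∀ i t, i < k → t < w → C i t = ∑ r ∈ Finset.range (i * w + t + 1), A r := by
  have hBsum : ∀ i t, i < k → t < w →
      B i t = ∑ r ∈ Finset.Ico (i * w) (i * w + t + 1), A r := by
    intro i t hi ht
    induction t with
    | zero => simpa using hB0 i hi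
    | succ t ih =>
      rw [hB i (t + 1) hi (by omega) ht, Nat.add_sub_cancel, ih (by omega),
        show i * w + (t + 1) + 1 = (i * w + t + 1) + 1 by ring,
        Finset.sum_Ico_succ_top (by omega), Finset.sum_Ico_succ_top (by omega),
        Finset.sum_Ico_succ_top (by omega)]
      ring_nf
  suffices h : ∀ i, i < k → ∀ t, t < w →
      C i t = ∑ r ∈ Finset.range (i * w + t + 1), A r by
    exact fun i t hi ht => h i hi t ht
  intro i
  induction i with
  | zero =>
    intro hi t ht
    rw [hC0 t ht, hBsum 0 t hi ht, Finset.range_eq_Ico]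
    norm_num
  | succ i ih =>
    intro hi t ht
    rw [hC (i + 1) t (by omega) hi ht, hBsum (i + 1) t hi ht,
      Nat.add_sub_cancel, ih (by omega) (w - 1) (by omega)]
    have h1 : i * w + (w - 1) + 1 = (i + 1) * w := by
      cases w with
      | zero => omega
      | succ n => ring_nf; omega
    rw [h1, Nat.add_comm, Finset.range_eq_Ico,
      Finset.sum_Ico_consecutive A (Nat.zero_le ((i + 1) * w)) (by omega)]
    rw [Finset.range_eq_Ico]
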